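/- Let {Λ_1, ..., Λ_d} and Λ be extended-real-valued functions with, for some index set structure, (1/n) log E[e^{θ S_n}] ≤ (1/n) log(n Σ_{i,j} E[e^{θ D_{[0,n]}^{(i,j)}}]) and lim_n (1/n) log E[e^{θ D_{[1,n]}^{(i,j)}}] = max_{k ∈ [i≤j]} Λ_{[k]}(θ) for θ ∈ [0,η). Then Λ_S(θ) = max_{1≤ℓ≤d} Λ_ℓ(θ) for all θ ∈ [0,η). -/

import Mathlib

open Filter ENNReal

private lemma ereal_coe_mul_add (c x : ℝ) (hc : 0 ≤ c) (y : EReal) :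
    (c : EReal) * ((x : EReal) + y) = (c : EReal) * x + (c : EReal) * y := by
  rcases eq_or_lt_of_le hc with h | h
  · simp [← h]
  · induction y using EReal.rec with
    | bot =>
      rw [EReal.add_bot, EReal.coe_mul_bot_of_pos h, EReal.add_bot]
    | coe y =>
      rw [← EReal.coe_add, ← EReal.coe_mul, ← EReal.coe_mul, ← EReal.coe_mul, ← EReal.coe_add,
        mul_add]
    | top =>
      rw [EReal.coe_add_top, EReal.coe_mul_top_of_pos h, ← EReal.coe_mul, EReal.coe_add_top]

private lemma tendsto_finset_sup' {ι : Type*} (t : Finset ι) (ht : t.Nonempty)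
    (u : ι → ℕ → EReal) (L : ι → EReal)
    (h : ∀ i ∈ t, Tendsto (u i) atTop (nhds (L i))) :
    Tendsto (fun n => t.sup' ht (fun i => u i n)) atTop (nhds (t.sup' ht L)) := by
  refine Finset.Nonempty.cons_induction
    (motive := fun t ht => (∀ i ∈ t, Tendsto (u i) atTop (nhds (L i))) →
      Tendsto (fun n => t.sup' ht (fun i => u i n)) atTop (nhds (t.sup' ht L)))
    ?_ ?_ ht h
  · intro i hi
    have h1 := hi i (Finset.mem_singleton_self i)
    convert h1 using 2 <;> simp
  · intro i t hit hnt ih hall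
    simp_rw [Finset.sup'_cons hnt]
    exact (hall i (Finset.mem_cons_self i t)).max
      (ih fun j hj => hall j (Finset.mem_cons_of_mem hj))

private lemma ereal_tendsto_add_zero {u : ℕ → ℝ} {v : ℕ → EReal} {L : EReal}
    (hu : Tendsto u atTop (nhds 0)) (hv : Tendsto v atTop (nhds L)) :
    Tendsto (fun n => ((u n : EReal)) + v n) atTop (nhds L) := by
  have h0 : Tendsto (fun n => ((u n : ℝ) : EReal)) atTop (nhds ((0 : ℝ) : EReal)) :=
    EReal.tendsto_coe.2 hu
  have hcont : ContinuousAt (fun p : EReal × EReal => p.1 + p.2) (((0 : ℝ) : EReal), L) :=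
    EReal.continuousAt_add (by simp) (by simp)
  have := hcont.tendsto.comp (h0.prodMk_nhds hv)
  simpa [Function.comp_def] using this

/-- Lemma 5.8 (abstract form): if the moment generating sequence `f n = E[e^{θ S_n}]`
of the maximal dater is squeezed between the entrywise moment sequences
`g i j n = E[e^{θ D_{[·,n]}^{(i,j)}}]` (lower bound from the diagonal, upper bound
`f n ≤ n Σ_{i,j} g i j n`), the classes `[i ≤ j]` satisfy `[i ≤ i] = {[i]}`, every class
is realized, and `(1/n) log g i j n → max_{k ∈ [i≤j]} Λ_k`, then
`Λ_S(θ) = lim (1/n) log f n = max_ℓ Λ_ℓ(θ)`. -/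
theorem lambdaS_eq_sup_blocks (s d : ℕ) (hs : 0 < s) (hd : 0 < d)
    (f : ℕ → ℝ≥0∞) (g : Fin s → Fin s → ℕ → ℝ≥0∞)
    (c : Fin s → Fin d) (K : Fin s → Fin s → Set (Fin d)) (Lam : Fin d → EReal)
    (hsurj : Function.Surjective c)
    (hKdiag : ∀ i, K i i = {c i})
    (hupper : ∀ n : ℕ, f n ≤ (n : ℝ≥0∞) * ∑ i : Fin s, ∑ j : Fin s, g i j n)
    (hlower : ∀ (i : Fin s) (n : ℕ), g i i n ≤ f n)
    (hlim : ∀ i j : Fin s,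
      Tendsto (fun n : ℕ => (((n : ℝ)⁻¹ : ℝ) : EReal) * ENNReal.log (g i j n)) atTop
        (nhds (⨆ k ∈ K i j, Lam k))) :
    Tendsto (fun n : ℕ => (((n : ℝ)⁻¹ : ℝ) : EReal) * ENNReal.log (f n)) atTop
      (nhds (⨆ ℓ : Fin d, Lam ℓ)) := by
  haveI : NeZero s := ⟨hs.ne'⟩
  set S : EReal := ⨆ ℓ : Fin d, Lam ℓ with hS
  set b : ℕ → EReal := fun n => (((n : ℝ)⁻¹ : ℝ) : EReal) * ENNReal.log (f n) with hb
  set a : Fin s × Fin s → ℕ → EReal :=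
    fun p n => (((n : ℝ)⁻¹ : ℝ) : EReal) * ENNReal.log (g p.1 p.2 n) with ha
  set L : Fin s × Fin s → EReal := fun p => ⨆ k ∈ K p.1 p.2, Lam k with hL
  have hne : (Finset.univ : Finset (Fin s × Fin s)).Nonempty := Finset.univ_nonempty
  -- the nonnegativity of the multiplicative factor
  have hfac : ∀ n : ℕ, (0 : EReal) ≤ (((n : ℝ)⁻¹ : ℝ) : EReal) := by
    intro n
    exact EReal.coe_nonneg.2 (by positivity)
  -- lower bound: S ≤ liminf b
  have hlower' : S ≤ liminf b atTop := by
    refine iSup_le fun ℓ => ?_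
    obtain ⟨i, rfl⟩ := hsurj ℓ
    have h1 : Tendsto (a (i, i)) atTop (nhds (Lam (c i))) := by
      have := hlim i i
      rw [hKdiag i] at this
      simpa using this
    have h2 : liminf (a (i, i)) atTop ≤ liminf b atTop := by
      refine liminf_le_liminf (Eventually.of_forall fun n => ?_)
      exact mul_le_mul_of_nonneg_left (ENNReal.log_monotone (hlower i n)) (hfac n)
    rw [← h1.liminf_eq]
    exact h2
  -- upper bound sequence
  set N : ℕ := (Finset.univ : Finset (Fin s × Fin s)).card with hN
  have hNpos : 0 < N := Finset.card_pos.2 hne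
  set r : ℕ → EReal := fun n =>
    (((n : ℝ)⁻¹ * Real.log n : ℝ) : EReal) +
      ((((n : ℝ)⁻¹ * Real.log N : ℝ) : EReal) +
        Finset.univ.sup' hne (fun p => a p n)) with hr
  have hbr : ∀ n : ℕ, 1 ≤ n → b n ≤ r n := by
    intro n hn
    have hn0 : (0 : ℝ) < (n : ℝ) := by exact_mod_cast hn
    -- the max of the entries
    obtain ⟨p₀, -, hp₀⟩ :=
      Finset.exists_mem_eq_sup' hne (fun p : Fin s × Fin s => g p.1 p.2 n)
    set M : ℝ≥0∞ := Finset.univ.sup' hne (fun p : Fin s × Fin s => g p.1 p.2 n) with hM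
    have hsum : (∑ i : Fin s, ∑ j : Fin s, g i j n) ≤ (N : ℝ≥0∞) * M := by
      have : (∑ i : Fin s, ∑ j : Fin s, g i j n)
          = ∑ p : Fin s × Fin s, g p.1 p.2 n := by
        rw [← Finset.sum_product']
        rfl
      rw [this]
      calc ∑ p : Fin s × Fin s, g p.1 p.2 n
          ≤ N • M := Finset.sum_le_card_nsmul _ _ _ (fun p _ => Finset.le_sup' (fun p : Fin s × Fin s => g p.1 p.2 n) (Finset.mem_univ p))
        _ = (N : ℝ≥0∞) * M := nsmul_eq_mul _ _
    have hlogf : ENNReal.log (f n)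
        ≤ ((Real.log n : ℝ) : EReal) + (((Real.log N : ℝ) : EReal) + ENNReal.log M) := by
      calc ENNReal.log (f n)
          ≤ ENNReal.log ((n : ℝ≥0∞) * ((N : ℝ≥0∞) * M)) := by
            refine ENNReal.log_monotone ?_
            exact (hupper n).trans (by gcongr)
        _ = ENNReal.log (n : ℝ≥0∞) + (ENNReal.log (N : ℝ≥0∞) + ENNReal.log M) := by
            rw [ENNReal.log_mul_add, ENNReal.log_mul_add]
        _ = ((Real.log n : ℝ) : EReal) + (((Real.log N : ℝ) : EReal) + ENNReal.log M) := by
            rw [← ENNReal.ofReal_natCast n, ENNReal.log_ofReal_of_pos hn0,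
              ← ENNReal.ofReal_natCast N, ENNReal.log_ofReal_of_pos (by exact_mod_cast hNpos)]
    have step : b n ≤ (((n : ℝ)⁻¹ : ℝ) : EReal) *
        (((Real.log n : ℝ) : EReal) + (((Real.log N : ℝ) : EReal) + ENNReal.log M)) :=
      mul_le_mul_of_nonneg_left hlogf (hfac n)
    have hinv : (0 : ℝ) ≤ (n : ℝ)⁻¹ := by positivity
    rw [ereal_coe_mul_add _ _ hinv, ereal_coe_mul_add _ _ hinv] at step
    refine step.trans ?_
    rw [hr]
    refine add_le_add (EReal.coe_mul _ _).symm.le (add_le_add (EReal.coe_mul _ _).symm.le ?_)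
    rw [hp₀]
    exact Finset.le_sup' (fun p => a p n) (Finset.mem_univ p₀)
  -- the limit of r
  have hrlim : Tendsto r atTop (nhds (Finset.univ.sup' hne L)) := by
    have h1 : Tendsto (fun n : ℕ => (n : ℝ)⁻¹ * Real.log n) atTop (nhds 0) := by
      have := Real.isLittleO_log_id_atTop.tendsto_div_nhds_zero
      have := this.comp tendsto_natCast_atTop_atTop (α := ℕ)
      refine this.congr fun n => ?_
      simp [div_eq_mul_inv, mul_comm, Function.comp]
    have h2 : Tendsto (fun n : ℕ => (n : ℝ)⁻¹ * Real.log N) atTop (nhds 0) := by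
      simpa using (tendsto_inv_atTop_nhds_zero_nat (𝕜 := ℝ)).mul_const (Real.log N)
    have h3 : Tendsto (fun n => Finset.univ.sup' hne (fun p => a p n)) atTop
        (nhds (Finset.univ.sup' hne L)) :=
      tendsto_finset_sup' _ hne a L (fun p _ => hlim p.1 p.2)
    exact ereal_tendsto_add_zero h1 (ereal_tendsto_add_zero h2 h3)
  have hLS : Finset.univ.sup' hne L ≤ S := by
    refine Finset.sup'_le _ _ fun p _ => ?_
    exact iSup₂_le fun k _ => le_iSup Lam k
  have hupper' : limsup b atTop ≤ S := by
    calc limsup b atTop ≤ limsup r atTop := by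
          refine limsup_le_limsup ?_
          filter_upwards [eventually_ge_atTop 1] with n hn
          exact hbr n hn
      _ = Finset.univ.sup' hne L := hrlim.limsup_eq
      _ ≤ S := hLS
  exact tendsto_of_le_liminf_of_limsup_le hlower' hupper'
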